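/- With V_μ the linear operator on polynomials defined by V_μ(x^{2n+ε}) = [(1/2)_{n+ε}/(μ+1/2)_{n+ε}] x^{2n+ε} (ε ∈ {0,1}), and the generalized Hermite polynomials defined by H^μ_{2n+ε}(x) = [(-1)^n (2n+ε)! / (μ+1/2)_{n+ε}] x^ε L_n^{μ-1/2+ε}(x^2) with L_n^α the Laguerre polynomial, one has V_μ H_{2n+ε}(x) = H^μ_{2n+ε}(x) for all n ≥ 0 and ε ∈ {0,1}, where H_n is the physicists' Hermite polynomial. -/
import Mathlib


open Polynomial in
noncomputable def hermiteP : ℕ → Polynomial ℝ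
  | 0 => 1
  | 1 => 2 * X
  | (n + 2) => 2 * X * hermiteP (n + 1) - C (2 * ((n : ℝ) + 1)) * hermiteP n

open Polynomial in
noncomputable def laguerreP (α : ℝ) (n : ℕ) : Polynomial ℝ :=
  C ((ascPochhammer ℝ n).eval (α + 1) / (Nat.factorial n : ℝ)) *
    ∑ k ∈ Finset.range (n + 1),
      C ((ascPochhammer ℝ k).eval (-(n : ℝ))
          / ((ascPochhammer ℝ k).eval (α + 1) * (Nat.factorial k : ℝ))) * X^k

open Finset Polynomial

lemma hermiteP_rec (m : ℕ) : hermiteP (m+2) = 2 * X * hermiteP (m + 1) - C (2 * ((m : ℝ) + 1)) * hermiteP m := by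
  conv_lhs => rw [hermiteP]

noncomputable def bco (n ε k : ℕ) : ℝ :=
  (-1)^(n-k) * ((2*n+ε).factorial : ℝ) * 2^(2*k+ε) / ((n-k).factorial * (2*k+ε).factorial)

lemma factR (m : ℕ) : ((m+1).factorial : ℝ) = (m+1) * m.factorial := by
  rw [Nat.factorial_succ]; push_cast; ring

lemma factne (m : ℕ) : (m.factorial : ℝ) ≠ 0 := Nat.cast_ne_zero.2 (Nat.factorial_ne_zero _)

lemma key_even (n k : ℕ) (hk : k < n) :
    bco (n+1) 0 (k+1) = 2 * bco n 1 k - 2*(((2*n : ℕ):ℝ)+1) * bco n 0 (k+1) := by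
  obtain ⟨j, rfl⟩ : ∃ j, n = k+1+j := ⟨n-k-1, by omega⟩
  simp only [bco]
  rw [show (k+1+j+1) - (k+1) = j+1 from by omega,
      show (k+1+j) - k = j+1 from by omega,
      show (k+1+j) - (k+1) = j from by omega,
      show 2*(k+1+j+1)+0 = (2*(k+1+j)+1)+1 from by ring,
      show 2*(k+1)+0 = (2*k+1)+1 from by ring]
  rw [show 2*(k+1+j)+1 = (2*(k+1+j)+0)+1 from by ring]
  rw [factR ((2*(k+1+j)+0)+1), factR (2*(k+1+j)+0), factR (2*k+1), factR j]
  push_cast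
  rw [pow_succ]
  field_simp
  ring

lemma edge_e1 (n : ℕ) : bco (n+1) 0 (n+1) = 2 * bco n 1 n := by
  simp only [bco, Nat.sub_self, pow_zero, one_mul, Nat.factorial_zero, Nat.cast_one]
  field_simp [factne]
  ring

lemma edge_e2 (n : ℕ) : bco (n+1) 0 0 = -(2*(((2*n : ℕ):ℝ)+1) * bco n 0 0) := by
  simp only [bco, Nat.sub_zero]
  rw [show 2*(n+1)+0 = ((2*n+0)+1)+1 from by ring]
  rw [factR ((2*n+0)+1), factR (2*n+0), factR n, pow_succ]
  push_cast
  field_simp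
  ring

lemma key_odd (n k : ℕ) (hk : k ≤ n) :
    bco (n+1) 1 k = 2 * bco (n+1) 0 k - 2*(((2*n+1 : ℕ):ℝ)+1) * bco n 1 k := by
  obtain ⟨j, rfl⟩ : ∃ j, n = k+j := ⟨n-k, by omega⟩
  simp only [bco]
  rw [show (k+j+1) - k = j+1 from by omega,
      show (k+j) - k = j from by omega,
      show 2*(k+j+1)+1 = ((2*(k+j)+1)+1)+1 from by ring,
      show 2*(k+j+1)+0 = (2*(k+j)+1)+1 from by ring,
      show 2*k+1 = (2*k+0)+1 from by ring]
  rw [factR ((2*(k+j)+1)+1), factR (2*(k+j)+1), factR (2*k+0), factR j]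
  push_cast
  rw [pow_succ]
  field_simp
  ring

lemma edge_o1 (n : ℕ) : bco (n+1) 1 (n+1) = 2 * bco (n+1) 0 (n+1) := by
  simp only [bco, Nat.sub_self, pow_zero, one_mul, Nat.factorial_zero, Nat.cast_one]
  rw [show 2*(n+1)+1 = (2*(n+1)+0)+1 from by ring, factR (2*(n+1)+0), pow_succ]
  field_simp [factne]
  ring

lemma hermiteP_sum (n : ℕ) :
    hermiteP (2*n) = ∑ k ∈ range (n+1), C (bco n 0 k) * X^(2*k) ∧
    hermiteP (2*n+1) = ∑ k ∈ range (n+1), C (bco n 1 k) * X^(2*k+1) := by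
  induction n with
  | zero =>
    constructor
    · show hermiteP 0 = _
      simp [hermiteP, bco]
    · show hermiteP 1 = _
      simp [hermiteP, bco]
      exact (map_ofNat C 2).symm
  | succ n ih =>
    obtain ⟨ih0, ih1⟩ := ih
    have h2 : hermiteP (2*(n+1)) = ∑ k ∈ range (n+1+1), C (bco (n+1) 0 k) * X^(2*k) := by
      rw [show 2*(n+1) = 2*n+2 from by ring, hermiteP_rec, ih0, ih1, Finset.mul_sum,
        Finset.mul_sum]
      rw [Finset.sum_congr rfl (fun k _ =>
        show 2 * X * (C (bco n 1 k) * X^(2*k+1)) = C (2 * bco n 1 k) * X^(2*k+2) from by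
          simp only [map_mul, map_add, map_ofNat, map_natCast, map_one]; ring)]
      rw [Finset.sum_congr rfl (fun k _ =>
        show C (2*(((2*n : ℕ):ℝ)+1)) * (C (bco n 0 k) * X^(2*k))
            = C (2*(((2*n : ℕ):ℝ)+1) * bco n 0 k) * X^(2*k) from by
          simp only [map_mul, map_add, map_ofNat, map_natCast, map_one]; ring)]
      rw [Finset.sum_range_succ' (fun k => C (bco (n+1) 0 k) * X^(2*k)) (n+1)]
      rw [Finset.sum_range_succ (fun k => C (bco (n+1) 0 (k+1)) * X^(2*(k+1))) n]
      rw [Finset.sum_range_succ (fun k => C (2 * bco n 1 k) * X^(2*k+2)) n]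
      rw [Finset.sum_range_succ' (fun k => C (2*(((2*n : ℕ):ℝ)+1) * bco n 0 k) * X^(2*k)) n]
      rw [Finset.sum_congr rfl (fun k hk =>
        show C (bco (n+1) 0 (k+1)) * X^(2*(k+1))
            = C (2 * bco n 1 k) * X^(2*k+2)
              - C (2*(((2*n : ℕ):ℝ)+1) * bco n 0 (k+1)) * X^(2*(k+1)) from by
          rw [key_even n k (Finset.mem_range.1 hk), map_sub]; ring)]
      rw [Finset.sum_sub_distrib, edge_e1, edge_e2]
      rw [map_neg, map_mul]
      ring
    constructor
    · exact h2
    · rw [show 2*(n+1)+1 = (2*n+1)+2 from by ring, hermiteP_rec,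
        show 2*n+1+1 = 2*(n+1) from by ring, h2, ih1, Finset.mul_sum, Finset.mul_sum]
      rw [Finset.sum_congr rfl (fun k _ =>
        show 2 * X * (C (bco (n+1) 0 k) * X^(2*k)) = C (2 * bco (n+1) 0 k) * X^(2*k+1) from by
          simp only [map_mul, map_add, map_ofNat, map_natCast, map_one]; ring)]
      rw [Finset.sum_congr rfl (fun k _ =>
        show C (2*(((2*n+1 : ℕ):ℝ)+1)) * (C (bco n 1 k) * X^(2*k+1))
            = C (2*(((2*n+1 : ℕ):ℝ)+1) * bco n 1 k) * X^(2*k+1) from by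
          simp only [map_mul, map_add, map_ofNat, map_natCast, map_one]; ring)]
      rw [Finset.sum_range_succ (fun k => C (bco (n+1) 1 k) * X^(2*k+1)) (n+1)]
      rw [Finset.sum_range_succ (fun k => C (2 * bco (n+1) 0 k) * X^(2*k+1)) (n+1)]
      rw [Finset.sum_congr rfl (fun k (hk : k ∈ range (n+1)) =>
        show C (bco (n+1) 1 k) * X^(2*k+1)
            = C (2 * bco (n+1) 0 k) * X^(2*k+1)
              - C (2*(((2*n+1 : ℕ):ℝ)+1) * bco n 1 k) * X^(2*k+1) from by
          rw [key_odd n k (by have := Finset.mem_range.1 hk; omega : k ≤ n), map_sub]; ring)]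
      rw [Finset.sum_sub_distrib, edge_o1, map_mul]
      ring


lemma asc_eval_half (m : ℕ) :
    (ascPochhammer ℝ m).eval (1/2 : ℝ) = (2*m).factorial / (4^m * m.factorial) := by
  induction m with
  | zero => simp
  | succ k ih =>
    rw [ascPochhammer_succ_eval, ih]
    have h1 : ((2*k).factorial : ℝ) ≠ 0 := factne _
    have h2 : ((2*(k+1)) = (2*k+1)+1) := by ring
    rw [h2, Nat.factorial_succ, Nat.factorial_succ, Nat.factorial_succ]
    push_cast
    have h3 : (k.factorial : ℝ) ≠ 0 := factne _
    field_simp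
    ring

lemma asc_eval_neg (k j : ℕ) :
    (ascPochhammer ℝ k).eval (-((k+j : ℕ) : ℝ)) = (-1)^k * (k+j).factorial / j.factorial := by
  induction k generalizing j with
  | zero =>
    have h3 : (j.factorial : ℝ) ≠ 0 := factne _
    simp [div_self h3]
  | succ k ih =>
    rw [ascPochhammer_succ_eval]
    have := ih (j+1)
    rw [show ((k + (j+1) : ℕ) : ℝ) = ((k+1+j : ℕ) : ℝ) by push_cast; ring] at this
    rw [show (k + (j+1)) = (k+1+j) from by ring] at this
    rw [this]
    have h3 : (j.factorial : ℝ) ≠ 0 := factne _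
    have h4 : ((j+1).factorial : ℝ) = (j+1) * j.factorial := by
      rw [Nat.factorial_succ]; push_cast; ring
    rw [h4]
    push_cast
    field_simp
    ring

lemma asc_ne_zero {x : ℝ} (hx : ∀ j : ℕ, x ≠ -(j : ℝ)) (m : ℕ) :
    (ascPochhammer ℝ m).eval x ≠ 0 := by
  induction m with
  | zero => simp
  | succ k ih =>
    rw [ascPochhammer_succ_eval]
    refine mul_ne_zero ih ?_
    intro h
    exact hx k (by linarith)

lemma asc_split_one (m : ℕ) (x : ℝ) :
    (ascPochhammer ℝ (m+1)).eval x = x * (ascPochhammer ℝ m).eval (x+1) := by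
  rw [ascPochhammer_succ_left]
  simp [eval_comp]

lemma two_pow_eq (k : ℕ) : (4:ℝ)^k = 2^(2*k) := by
  rw [show (4:ℝ) = 2^2 by norm_num, ← pow_mul]

theorem dunkl_intertwiner_hermite_eq_generalized_hermite (μ : ℝ)
    (hμ : ∀ j : ℕ, μ + 1/2 ≠ -(j : ℝ))
    (V : Polynomial ℝ →ₗ[ℝ] Polynomial ℝ)
    (hV : ∀ m ε : ℕ, ε ≤ 1 →
      V (X^(2*m + ε))
        = C ((ascPochhammer ℝ (m + ε)).eval (1/2)
              / (ascPochhammer ℝ (m + ε)).eval (μ + 1/2)) * X^(2*m + ε))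
    (n ε : ℕ) (hε : ε ≤ 1) :
    V (hermiteP (2*n + ε))
    = C ((-1)^n * ((2*n + ε).factorial : ℝ)
          / (ascPochhammer ℝ (n + ε)).eval (μ + 1/2))
        * X^ε * (laguerreP (μ - 1/2 + ε) n).comp (X^2) := by
  have hPn : ∀ m : ℕ, (ascPochhammer ℝ m).eval (μ + 1/2) ≠ 0 := asc_ne_zero hμ
  interval_cases ε
  · -- ε = 0
    simp only [Nat.add_zero, Nat.cast_zero, add_zero, pow_zero, mul_one]
    rw [(hermiteP_sum n).1, map_sum, laguerreP,
      show μ - 1/2 + 1 = μ + 1/2 by ring, mul_comp, C_comp, Polynomial.sum_comp]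
    rw [Finset.sum_congr rfl (fun k (hk : k ∈ Finset.range (n+1)) =>
      show V (C (bco n 0 k) * X^(2*k))
          = C (bco n 0 k * ((ascPochhammer ℝ k).eval (1/2)
              / (ascPochhammer ℝ k).eval (μ + 1/2))) * X^(2*k) from by
        have h := hV k 0 (by norm_num)
        simp only [Nat.add_zero] at h
        rw [← smul_eq_C_mul, map_smul, h, smul_eq_C_mul, ← mul_assoc, ← C_mul])]
    simp only [mul_comp, C_comp, pow_comp, X_comp, ← pow_mul]
    rw [Finset.mul_sum, Finset.mul_sum]
    refine Finset.sum_congr rfl (fun k hk => ?_)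
    have hkn := Finset.mem_range.1 hk
    obtain ⟨j, rfl⟩ : ∃ j, n = k + j := ⟨n - k, by omega⟩
    have hreal : bco (k+j) 0 k * ((ascPochhammer ℝ k).eval (1/2)
          / (ascPochhammer ℝ k).eval (μ+1/2))
        = (-1)^(k+j) * (((2*(k+j)).factorial : ℝ)) / (ascPochhammer ℝ (k+j)).eval (μ+1/2) *
          ((ascPochhammer ℝ (k+j)).eval (μ+1/2) / ((k+j).factorial : ℝ) *
            ((ascPochhammer ℝ k).eval (-((k+j : ℕ):ℝ))
              / ((ascPochhammer ℝ k).eval (μ+1/2) * (k.factorial : ℝ)))) := by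
      rw [asc_eval_half, asc_eval_neg, bco, show k+j-k = j from by omega]
      simp only [Nat.add_zero]
      rw [two_pow_eq]
      simp only [div_mul_eq_mul_div, mul_div_assoc', div_div]
      rw [div_eq_div_iff ?h1 ?h2]
      case h1 =>
        have := factne (2*k); have := factne k; have := factne j; have := hPn k
        positivity
      case h2 =>
        have := hPn (k+j); have := hPn k
        have := factne (k+j); have := factne k; have := factne j
        positivity
      ring_nf
      rw [show ((-1:ℝ))^(k*2) = 1 from by rw [mul_comm, pow_mul]; norm_num]
      ring
    rw [hreal]
    simp only [C_mul]
    ring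
  · -- ε = 1
    have hμ' : ∀ j : ℕ, μ + 1/2 + 1 ≠ -(j : ℝ) := by
      intro j h
      exact hμ (j+1) (by push_cast; linarith)
    have hQn : ∀ m : ℕ, (ascPochhammer ℝ m).eval (μ + 1/2 + 1) ≠ 0 := asc_ne_zero hμ'
    have hμ0 : μ + 1/2 ≠ 0 := by have := hμ 0; simpa using this
    simp only [Nat.cast_one, pow_one]
    rw [(hermiteP_sum n).2, map_sum, laguerreP,
      show μ - 1/2 + 1 + 1 = μ + 1/2 + 1 by ring, mul_comp, C_comp, Polynomial.sum_comp]
    rw [Finset.sum_congr rfl (fun k (hk : k ∈ Finset.range (n+1)) =>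
      show V (C (bco n 1 k) * X^(2*k+1))
          = C (bco n 1 k * ((ascPochhammer ℝ (k+1)).eval (1/2)
              / (ascPochhammer ℝ (k+1)).eval (μ + 1/2))) * X^(2*k+1) from by
        have h := hV k 1 (le_refl 1)
        rw [← smul_eq_C_mul, map_smul, h, smul_eq_C_mul, ← mul_assoc, ← C_mul])]
    simp only [mul_comp, C_comp, pow_comp, X_comp, ← pow_mul]
    rw [Finset.mul_sum, Finset.mul_sum]
    refine Finset.sum_congr rfl (fun k hk => ?_)
    have hkn := Finset.mem_range.1 hk
    obtain ⟨j, rfl⟩ : ∃ j, n = k + j := ⟨n - k, by omega⟩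
    have hreal : bco (k+j) 1 k * ((ascPochhammer ℝ (k+1)).eval (1/2)
          / (ascPochhammer ℝ (k+1)).eval (μ+1/2))
        = (-1)^(k+j) * (((2*(k+j)+1).factorial : ℝ))
            / (ascPochhammer ℝ (k+j+1)).eval (μ+1/2) *
          ((ascPochhammer ℝ (k+j)).eval (μ+1/2+1) / ((k+j).factorial : ℝ) *
            ((ascPochhammer ℝ k).eval (-((k+j : ℕ):ℝ))
              / ((ascPochhammer ℝ k).eval (μ+1/2+1) * (k.factorial : ℝ)))) := by
      rw [asc_eval_half, asc_eval_neg, asc_split_one, asc_split_one, bco,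
        show k+j-k = j from by omega,
        show 2*(k+1) = (2*k+1)+1 from by ring, factR (2*k+1), factR k, two_pow_eq]
      simp only [div_mul_eq_mul_div, mul_div_assoc', div_div]
      rw [div_eq_div_iff ?g1 ?g2]
      case g1 =>
        have := factne (2*k+1); have := factne k; have := factne j
        have := hQn k
        positivity
      case g2 =>
        have := hQn (k+j); have := hQn k
        have := factne (k+j); have := factne k; have := factne j
        positivity
      have hm2 : ((-1:ℝ))^k * (-1)^k = 1 := by
        rw [← pow_add, ← two_mul, pow_mul]; norm_num
      push_cast
      linear_combination (-((-1:ℝ)^j * ((2*(k+j)+1).factorial:ℝ)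
        * (Polynomial.eval (μ+1/2+1) (ascPochhammer ℝ (k+j)) * ((k+j).factorial:ℝ))
        * ((j.factorial:ℝ) * ((2*k+1).factorial:ℝ)
          * (2^(2*(k+1)) * (((k:ℝ)+1) * (k.factorial:ℝ))
            * ((μ+1/2) * Polynomial.eval (μ+1/2+1) (ascPochhammer ℝ k)))))) * hm2
    rw [hreal]
    simp only [C_mul]
    ring
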